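/- Let (X,∂) ⇄ (Y,d) with maps ∇, f and homotopy φ be a strong deformation retract of chain complexes such that (X,∂,Δ_X) and (Y,d,Δ_Y) are coassociative chain coalgebras and ∇ is a map of coalgebras (Eilenberg–Zilber data). Then the degree +1 map H := (f⊗f) ∘ Δ_Y ∘ φ : Y → X⊗X satisfies (d⊗1 + 1⊗d)H + Hd = Δ_X ∘ f − (f⊗f) ∘ Δ_Y; in particular f is a map of coalgebras up to chain homotopy. -/
import Mathlib


open CategoryTheory Simplicial DirectSum

set_option maxHeartbeats 1000000
set_option synthInstance.maxHeartbeats 200000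
set_option linter.unusedVariables false

noncomputable section

/-- An ℕ-graded chain complex of abelian groups, in "total" form: a single abelian
group together with an internal grading and a differential of degree `-1`. -/
structure GCx : Type 1 where
  X : Type
  [inst : AddCommGroup X]
  gr : ℕ → AddSubgroup X
  internal : DirectSum.IsInternal gr
  d : X →+ X
  d_gr : ∀ n, ∀ x ∈ gr (n + 1), d x ∈ gr n
  d_gr0 : ∀ x ∈ gr 0, d x = 0
  dd : ∀ x, d (d x) = 0

attribute [instance] GCx.inst

namespace GCx

/-- The decomposition map of an internally graded group. -/
def dec (A : GCx) : A.X →+ ⨁ n, A.gr n :=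
  (AddEquiv.ofBijective (DirectSum.coeAddMonoidHom A.gr) A.internal).symm.toAddMonoidHom

/-- The operator multiplying a homogeneous element of degree `n` by `c n`. -/
def sgn (A : GCx) (c : ℕ → ℤ) : A.X →+ A.X :=
  (DirectSum.toAddMonoid fun n =>
    AddMonoidHom.mk' (fun x : A.gr n => c n • (x : A.X))
      (fun a b => by simp [smul_add])).comp A.dec

/-- The Koszul sign operator `x ↦ (-1)^{|x|} x`. -/
def eps (A : GCx) : A.X →+ A.X := A.sgn fun n => (-1) ^ n

end GCx

/-- A degree `0` chain map between graded chain complexes. -/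
def IsChainMap (A B : GCx) (f : A.X →+ B.X) : Prop :=
  (∀ n, ∀ x ∈ A.gr n, f x ∈ B.gr n) ∧ ∀ x, f (A.d x) = B.d (f x)

/-- A degree `+1` linear map. -/
def IsDegreePlusOne (A B : GCx) (h : A.X →+ B.X) : Prop :=
  ∀ n, ∀ x ∈ A.gr n, h x ∈ B.gr (n + 1)

/-- `h` is a chain homotopy from `f` to `g`, i.e. `dh + hd = f - g`. -/
def IsHomotopyFromTo (A B : GCx) (h f g : A.X →+ B.X) : Prop :=
  ∀ x, B.d (h x) + h (A.d x) = f x - g x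

/-- Build a bi-additive map from a function which is additive in each variable. -/
def mkBi {A B Z : Type} [AddCommGroup A] [AddCommGroup B] [AddCommGroup Z]
    (F : A → B → Z) (hA : ∀ a a' b, F (a + a') b = F a b + F a' b)
    (hB : ∀ a b b', F a (b + b') = F a b + F a b') : A →+ B →+ Z :=
  AddMonoidHom.mk' (fun a => AddMonoidHom.mk' (F a) (hB a))
    (fun a a' => by ext b; simp [hA])

@[simp] lemma mkBi_apply {A B Z : Type} [AddCommGroup A] [AddCommGroup B] [AddCommGroup Z]
    (F : A → B → Z) (hA) (hB) (a : A) (b : B) : mkBi F hA hB a b = F a b := rfl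

/-- Pre-compose a bi-additive map with additive maps in each slot. -/
def bicomp {A A' B B' Z : Type} [AddCommGroup A] [AddCommGroup A'] [AddCommGroup B]
    [AddCommGroup B'] [AddCommGroup Z] (f : A →+ B →+ Z) (g : A' →+ A) (h : B' →+ B) :
    A' →+ B' →+ Z :=
  mkBi (fun a b => f (g a) (h b)) (fun a a' b => by simp) (fun a b b' => by simp)

/-- An abstract tensor product of graded chain complexes: a bi-additive structure
map satisfying the graded Leibniz rule and the universal property of the tensor
product of the underlying abelian groups. -/
structure TensorCx (A B T : GCx) : Type 1 where
  tmul : A.X →+ B.X →+ T.X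
  tmul_gr : ∀ p q a b, a ∈ A.gr p → b ∈ B.gr q → tmul a b ∈ T.gr (p + q)
  d_tmul : ∀ p a, a ∈ A.gr p → ∀ b,
    T.d (tmul a b) = tmul (A.d a) b + ((-1 : ℤ) ^ p) • tmul a (B.d b)
  up : ∀ (Z : Type) [AddCommGroup Z] (g : A.X →+ B.X →+ Z),
      ∃! h : T.X →+ Z, ∀ a b, h (tmul a b) = g a b

/-- The additive map out of a tensor product induced by a bi-additive map. -/
def TensorCx.lift {A B T : GCx} (tt : TensorCx A B T) {Z : Type} [AddCommGroup Z]
    (g : A.X →+ B.X →+ Z) : T.X →+ Z := (tt.up Z g).exists.choose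

/-- The tensor product `f ⊗ g` of two (degree zero) maps. -/
def TensorCx.map {A B T A' B' T' : GCx} (tt : TensorCx A B T) (tt' : TensorCx A' B' T')
    (f : A.X →+ A'.X) (g : B.X →+ B'.X) : T.X →+ T'.X := tt.lift (bicomp tt'.tmul f g)

/-- `twistBi A B s f` is the bi-additive map `(a, b) ↦ Σ s p q • f a_p b_q`, where
`a_p`, `b_q` are the homogeneous components; used to introduce Koszul signs. -/
def twistBi (A B : GCx) {Z : Type} [AddCommGroup Z] (s : ℕ → ℕ → ℤ)
    (f : A.X →+ B.X →+ Z) : A.X →+ B.X →+ Z :=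
  (DirectSum.toAddMonoid fun p =>
    (AddMonoidHom.mk' (fun φ : B.X →+ Z => φ.comp (B.sgn (s p)))
      (fun φ ψ => by ext b; simp)).comp (f.comp (A.gr p).subtype)).comp A.dec

/-- Two additive maps agreeing on homogeneous elements agree everywhere. -/
lemma homog_ext (A : GCx) {Z : Type} [AddCommGroup Z] (g₁ g₂ : A.X →+ Z)
    (h : ∀ p, ∀ x ∈ A.gr p, g₁ x = g₂ x) : ∀ x, g₁ x = g₂ x := by
  intro x
  obtain ⟨z, rfl⟩ := A.internal.surjective x
  have key : g₁.comp (DirectSum.coeAddMonoidHom A.gr)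
      = g₂.comp (DirectSum.coeAddMonoidHom A.gr) := by
    refine DirectSum.addHom_ext fun p xp => ?_
    simp only [AddMonoidHom.comp_apply, DirectSum.coeAddMonoidHom_of]
    exact h p xp xp.2
  exact DFunLike.congr_fun key z

lemma lift_tmul {A B T : GCx} (tt : TensorCx A B T) {Z : Type} [AddCommGroup Z]
    (g : A.X →+ B.X →+ Z) (a : A.X) (b : B.X) : tt.lift g (tt.tmul a b) = g a b :=
  (tt.up Z g).exists.choose_spec a b

/-- Two additive maps out of a tensor product agreeing on pure tensors agree. -/
lemma tensor_ext {A B T : GCx} (tt : TensorCx A B T) {Z : Type} [AddCommGroup Z]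
    (g₁ g₂ : T.X →+ Z) (h : ∀ a b, g₁ (tt.tmul a b) = g₂ (tt.tmul a b)) :
    ∀ t, g₁ t = g₂ t := by
  intro t
  have key : g₁ = g₂ := by
    refine ExistsUnique.unique (tt.up Z (mkBi (fun a b => g₁ (tt.tmul a b))
      (fun a a' b => by simp [map_add]) (fun a b b' => by simp [map_add])))
      (fun a b => rfl) (fun a b => (h a b).symm)
  rw [key]

lemma map_tmul {A B T A' B' T' : GCx} (tt : TensorCx A B T) (tt' : TensorCx A' B' T')
    (f : A.X →+ A'.X) (g : B.X →+ B'.X) (a : A.X) (b : B.X) :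
    tt.map tt' f g (tt.tmul a b) = tt'.tmul (f a) (g b) :=
  lift_tmul tt _ a b

/-- `f ⊗ g` is a chain map when `f` and `g` are. -/
lemma map_chain {A B T A' B' T' : GCx} (tt : TensorCx A B T) (tt' : TensorCx A' B' T')
    (f : A.X →+ A'.X) (g : B.X →+ B'.X) (hf : IsChainMap A A' f) (hg : IsChainMap B B' g) :
    ∀ t, T'.d (tt.map tt' f g t) = tt.map tt' f g (T.d t) := by
  refine tensor_ext tt (T'.d.comp (tt.map tt' f g)) ((tt.map tt' f g).comp T.d) ?_
  intro a b
  simp only [AddMonoidHom.comp_apply]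
  refine homog_ext A
    ((T'.d.comp (tt.map tt' f g)).comp (tt.tmul.flip b))
    (((tt.map tt' f g).comp T.d).comp (tt.tmul.flip b)) ?_ a
  intro p x hx
  simp only [AddMonoidHom.comp_apply, AddMonoidHom.flip_apply]
  rw [map_tmul, tt'.d_tmul p (f x) (hf.1 p x hx), tt.d_tmul p x hx, map_add, map_zsmul,
    map_tmul, map_tmul, hf.2, hg.2]

/-!
STATEMENT 13.  Let `(X,∂) ⇄ (Y,d)` with maps `∇, f` and homotopy `φ` be a strong
deformation retract of chain complexes such that `X` and `Y` are coassociative chain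
coalgebras and `∇` is a map of coalgebras (Eilenberg–Zilber data).  Then the degree `+1`
map `H := (f ⊗ f) ∘ Δ_Y ∘ φ : Y → X ⊗ X` satisfies
`(d⊗1 + 1⊗d) H + H d = Δ_X ∘ f − (f ⊗ f) ∘ Δ_Y`; in particular `f` is a map of
coalgebras up to chain homotopy.
-/
theorem statement13
    (X Y : GCx)
    -- the tensor squares of `X` and of `Y`
    (TX TY : GCx) (ttX : TensorCx X X TX) (ttY : TensorCx Y Y TY)
    -- the coalgebra structures
    (comulX : X.X →+ TX.X) (hcomulX : IsChainMap X TX comulX)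
    (comulY : Y.X →+ TY.X) (hcomulY : IsChainMap Y TY comulY)
    -- coassociativity of `Δ_X`, via a strictly associative triple tensor product
    (T3X : GCx) (ttLX : TensorCx TX X T3X) (ttRX : TensorCx X TX T3X)
    (hXassoc : ∀ a b c, ttLX.tmul (ttX.tmul a b) c = ttRX.tmul a (ttX.tmul b c))
    (hXcoassoc : ∀ x, (ttX.lift (bicomp ttLX.tmul comulX (AddMonoidHom.id _))) (comulX x)
      = (ttX.lift (bicomp ttRX.tmul (AddMonoidHom.id _) comulX)) (comulX x))
    -- coassociativity of `Δ_Y`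
    (T3Y : GCx) (ttLY : TensorCx TY Y T3Y) (ttRY : TensorCx Y TY T3Y)
    (hYassoc : ∀ a b c, ttLY.tmul (ttY.tmul a b) c = ttRY.tmul a (ttY.tmul b c))
    (hYcoassoc : ∀ y, (ttY.lift (bicomp ttLY.tmul comulY (AddMonoidHom.id _))) (comulY y)
      = (ttY.lift (bicomp ttRY.tmul (AddMonoidHom.id _) comulY)) (comulY y))
    -- the strong deformation retract
    (nab : X.X →+ Y.X) (hnab : IsChainMap X Y nab)
    (f : Y.X →+ X.X) (hf : IsChainMap Y X f)
    (φ : Y.X →+ Y.X) (hφdeg : IsDegreePlusOne Y Y φ)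
    (hret : ∀ x, f (nab x) = x)
    (hhtp : ∀ y, Y.d (φ y) + φ (Y.d y) = nab (f y) - y)
    (hφnab : ∀ x, φ (nab x) = 0)
    (hfφ : ∀ y, f (φ y) = 0)
    (hφφ : ∀ y, φ (φ y) = 0)
    -- `∇` is a map of coalgebras
    (hnabcoalg : ∀ x, comulY (nab x) = (TensorCx.map ttX ttY nab nab) (comulX x)) :
    ∀ y : Y.X,
      TX.d ((TensorCx.map ttY ttX f f) (comulY (φ y)))
        + (TensorCx.map ttY ttX f f) (comulY (φ (Y.d y)))
      = comulX (f y) - (TensorCx.map ttY ttX f f) (comulY y) := by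
  intro y
  set F := TensorCx.map ttY ttX f f with hF
  -- (f⊗f)∘(∇⊗∇) = id on TX
  have hfn : ∀ t, F ((TensorCx.map ttX ttY nab nab) t) = t := by
    refine tensor_ext ttX (F.comp (TensorCx.map ttX ttY nab nab)) (AddMonoidHom.id _) ?_
    intro a b
    simp only [AddMonoidHom.comp_apply, AddMonoidHom.id_apply, hF]
    rw [map_tmul, map_tmul, hret, hret]
  have hchain : ∀ t, TX.d (F t) = F (TY.d t) :=
    map_chain ttY ttX f f hf hf
  calc TX.d (F (comulY (φ y))) + F (comulY (φ (Y.d y)))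
      = F (comulY (Y.d (φ y))) + F (comulY (φ (Y.d y))) := by
        rw [hchain, hcomulY.2]
    _ = F (comulY (Y.d (φ y) + φ (Y.d y))) := by rw [map_add, map_add]
    _ = F (comulY (nab (f y))) - F (comulY y) := by rw [hhtp, map_sub, map_sub]
    _ = comulX (f y) - F (comulY y) := by rw [hnabcoalg, hfn]
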